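/- Extremal Kostant degree of the highest root (untwisted): let R be a finite reduced irreducible crystallographic root system with positive roots R₊, Weyl group W, and highest root θ. Then for every w ∈ W: n(θ, w) = 0 if w(θ) = θ; n(θ, w) = 1 if (w(θ), θ) > 0 and w(θ) ≠ θ; and n(θ, w) = 2 if (w(θ), θ) ≤ 0. -/

import Mathlib

open scoped RealInnerProductSpace

/-- A finite reduced irreducible crystallographic root system in a real inner
product space `V`. -/
structure IsRootSystem {V : Type*} [NormedAddCommGroup V] [InnerProductSpace ℝ V]
    (R : Set V) : Prop where
  finite : R.Finite
  span_top : Submodule.span ℝ R = ⊤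
  ne_zero : ∀ α ∈ R, α ≠ (0 : V)
  reflect_mem : ∀ α ∈ R, ∀ β ∈ R, β - (2 * ⟪β, α⟫ / ⟪α, α⟫) • α ∈ R
  integral : ∀ α ∈ R, ∀ β ∈ R, ∃ k : ℤ, 2 * ⟪β, α⟫ / ⟪α, α⟫ = (k : ℝ)
  reduced : ∀ α ∈ R, ∀ c : ℝ, c • α ∈ R → c = 1 ∨ c = -1
  irreducible : ¬ ∃ R₁ R₂ : Set V, R₁.Nonempty ∧ R₂.Nonempty ∧ R = R₁ ∪ R₂ ∧
    ∀ α ∈ R₁, ∀ β ∈ R₂, ⟪α, β⟫ = 0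

/-- The set of positive roots determined by a linear functional `f` nonvanishing
on the roots. -/
def posRoots {V : Type*} [NormedAddCommGroup V] [InnerProductSpace ℝ V]
    (R : Set V) (f : V →ₗ[ℝ] ℝ) : Set V :=
  {α | α ∈ R ∧ 0 < f α}

/-- The simple roots: positive roots which are not sums of two positive roots. -/
def simpleRoots {V : Type*} [NormedAddCommGroup V] [InnerProductSpace ℝ V]
    (R : Set V) (f : V →ₗ[ℝ] ℝ) : Set V :=
  {α | α ∈ posRoots R f ∧ ¬ ∃ β ∈ posRoots R f, ∃ γ ∈ posRoots R f, α = β + γ}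

/-- The reflection `s_α : x ↦ x - (x,α∨) α`, as a self-map of `V`. -/
noncomputable def rootReflection {V : Type*} [NormedAddCommGroup V]
    [InnerProductSpace ℝ V] (α : V) : Function.End V :=
  fun x => x - (2 * ⟪x, α⟫ / ⟪α, α⟫) • α

/-- The Weyl group, realized as the submonoid of self-maps of `V` generated by the
reflections in the roots (each reflection is an involution, so this is the group
generated by them). -/
noncomputable def weylMonoid {V : Type*} [NormedAddCommGroup V]
    [InnerProductSpace ℝ V] (R : Set V) : Submonoid (Function.End V) :=
  Submonoid.closure {g | ∃ α ∈ R, g = rootReflection α}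

/-- The set of lengths of decompositions of `μ` into a sum of positive roots
(with repetitions). -/
def decompLengths {V : Type*} [NormedAddCommGroup V] [InnerProductSpace ℝ V]
    (P : Set V) (μ : V) : Set ℕ :=
  {N | ∃ l : List V, (∀ β ∈ l, β ∈ P) ∧ l.sum = μ ∧ l.length = N}

section Aux
set_option linter.unusedSectionVars false
variable {V : Type*} [NormedAddCommGroup V] [InnerProductSpace ℝ V]
variable {R : Set V} {f : V →ₗ[ℝ] ℝ} {θ : V}

lemma inner_self_pos' {α : V} (h : α ≠ 0) : 0 < ⟪α, α⟫ :=
  real_inner_self_nonneg.lt_of_ne' (fun e => h (inner_self_eq_zero.1 e))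

lemma RS.neg_mem (hR : IsRootSystem R) {α : V} (hα : α ∈ R) : -α ∈ R := by
  have ha : ⟪α, α⟫ ≠ 0 := (inner_self_pos' (hR.ne_zero α hα)).ne'
  have h := hR.reflect_mem α hα α hα
  have hc : 2 * ⟪α, α⟫ / ⟪α, α⟫ = (2 : ℝ) := by field_simp
  rw [hc] at h
  have : α - (2 : ℝ) • α = -α := by
    rw [two_smul]; abel
  rwa [this] at h

/-- If two distinct roots have positive inner product, their difference is a root. -/
lemma RS.sub_mem (hR : IsRootSystem R) {α β : V} (hα : α ∈ R) (hβ : β ∈ R)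
    (hpos : 0 < ⟪α, β⟫) (hne : α ≠ β) : α - β ∈ R := by
  obtain ⟨k₁, hk₁⟩ := hR.integral β hβ α hα
  obtain ⟨k₂, hk₂⟩ := hR.integral α hα β hβ
  have ha : (0:ℝ) < ⟪α, α⟫ := inner_self_pos' (hR.ne_zero α hα)
  have hb : (0:ℝ) < ⟪β, β⟫ := inner_self_pos' (hR.ne_zero β hβ)
  have hba : ⟪β, α⟫ = ⟪α, β⟫ := real_inner_comm α β
  have hk₁pos : (0:ℝ) < (k₁ : ℝ) := by
    rw [← hk₁]; positivity
  have hk₂pos : (0:ℝ) < (k₂ : ℝ) := by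
    rw [← hk₂, hba]; positivity
  by_cases e₁ : k₁ = 1
  · have h := hR.reflect_mem β hβ α hα
    rw [hk₁, e₁] at h
    simpa using h
  · by_cases e₂ : k₂ = 1
    · have h := hR.reflect_mem α hα β hβ
      rw [hk₂, e₂] at h
      simp only [Int.cast_one, one_smul] at h
      have := RS.neg_mem hR h
      rwa [neg_sub] at this
    · exfalso
      have hk₁z : (0:ℤ) < k₁ := by exact_mod_cast hk₁pos
      have hk₂z : (0:ℤ) < k₂ := by exact_mod_cast hk₂pos
      have hk₁2 : (2:ℝ) ≤ (k₁ : ℝ) := by exact_mod_cast (by omega : (2:ℤ) ≤ k₁)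
      have hk₂2 : (2:ℝ) ≤ (k₂ : ℝ) := by exact_mod_cast (by omega : (2:ℤ) ≤ k₂)
      rw [← hk₁, le_div_iff₀ hb] at hk₁2
      rw [← hk₂, hba, le_div_iff₀ ha] at hk₂2
      have h1 : ⟪β, β⟫ ≤ ⟪α, β⟫ := by linarith
      have h2 : ⟪α, α⟫ ≤ ⟪α, β⟫ := by linarith
      have hcs := real_inner_mul_inner_self_le α β
      have hzero : ⟪α - β, α - β⟫ = 0 := by
        have hexp : ⟪α - β, α - β⟫ = ⟪α, α⟫ - 2 * ⟪α, β⟫ + ⟪β, β⟫ := by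
          simp only [inner_sub_left, inner_sub_right, real_inner_comm α β]; ring
        have hle : ⟪α, α⟫ - 2 * ⟪α, β⟫ + ⟪β, β⟫ ≤ 0 := by nlinarith
        have hge := real_inner_self_nonneg (x := α - β)
        linarith [hexp ▸ hge, hexp ▸ hle]
      exact hne (sub_eq_zero.1 (inner_self_eq_zero.1 hzero))

lemma RS.add_mem (hR : IsRootSystem R) {α β : V} (hα : α ∈ R) (hβ : β ∈ R)
    (hneg : ⟪α, β⟫ < 0) (hne : α ≠ -β) : α + β ∈ R := by
  have h := RS.sub_mem hR hα (RS.neg_mem hR hβ)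
    (by rw [inner_neg_right]; linarith) hne
  rwa [sub_neg_eq_add] at h

lemma sum_f_nonneg (hl : ∀ γ ∈ (l : List V), γ ∈ simpleRoots R f) : 0 ≤ f l.sum := by
  induction l with
  | nil => simp
  | cons a t ih =>
    have ha := (hl a (by simp)).1.2
    have ht := ih (fun γ hγ => hl γ (by simp [hγ]))
    simp only [List.sum_cons, map_add]
    linarith

lemma sum_f_pos (hl : ∀ γ ∈ (l : List V), γ ∈ simpleRoots R f) (hne : l ≠ []) :
    0 < f l.sum := by
  cases l with
  | nil => exact absurd rfl hne
  | cons a t =>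
    have ha := (hl a (by simp)).1.2
    have ht := sum_f_nonneg (l := t) (fun γ hγ => hl γ (by simp [hγ]))
    simp only [List.sum_cons, map_add]
    linarith

variable (hR : IsRootSystem R) (hf : ∀ α ∈ R, f α ≠ 0) (hθR : θ ∈ R)
    (hθ : ∀ β ∈ R, ∃ l : List V, (∀ γ ∈ l, γ ∈ simpleRoots R f) ∧ θ - β = l.sum)

include hR hf hθR hθ

lemma ftheta_pos : 0 < f θ := by
  rcases (hf θ hθR).lt_or_gt with h | h
  · exfalso
    obtain ⟨l, hl, hsum⟩ := hθ (-θ) (RS.neg_mem hR hθR)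
    rw [sub_neg_eq_add] at hsum
    have h1 : 0 ≤ f (θ + θ) := hsum ▸ sum_f_nonneg hl
    rw [map_add] at h1
    linarith
  · exact h

lemma theta_posRoot : θ ∈ posRoots R f := ⟨hθR, ftheta_pos hR hf hθR hθ⟩

/-- any root of the form θ - α with α a root is a positive root -/
lemma theta_sub_posRoot {α : V} (hα : α ∈ R) (hmem : θ - α ∈ R) :
    θ - α ∈ posRoots R f := by
  refine ⟨hmem, ?_⟩
  obtain ⟨l, hl, hsum⟩ := hθ α hα
  have h1 : 0 ≤ f (θ - α) := hsum ▸ sum_f_nonneg hl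
  exact h1.lt_of_ne' (hf _ hmem)

/-- P5: every positive root has nonnegative inner product with θ -/
lemma posRoot_inner_nonneg {β : V} (hβ : β ∈ posRoots R f) : 0 ≤ ⟪β, θ⟫ := by
  by_contra h
  push_neg at h
  have hne : β ≠ -θ := by
    intro e
    have := hβ.2
    rw [e, map_neg] at this
    linarith [ftheta_pos hR hf hθR hθ]
  have hsum : β + θ ∈ R := RS.add_mem hR hβ.1 hθR h hne
  obtain ⟨l, hl, hlsum⟩ := hθ (β + θ) hsum
  have he : θ - (β + θ) = -β := by abel
  rw [he] at hlsum
  have h1 : 0 ≤ f (-β) := hlsum ▸ sum_f_nonneg hl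
  rw [map_neg] at h1
  linarith [hβ.2]

/-- P6: a positive root with (β,θ) ≥ (θ,θ) equals θ -/
lemma eq_theta_of_big {β : V} (hβ : β ∈ posRoots R f) (hbig : ⟪θ, θ⟫ ≤ ⟪β, θ⟫) :
    β = θ := by
  have hθ0 : (0:ℝ) < ⟪θ, θ⟫ := inner_self_pos' (hR.ne_zero θ hθR)
  set r : ℝ := 2 * ⟪β, θ⟫ / ⟪θ, θ⟫ with hr
  have hr2 : (2:ℝ) ≤ r := by
    rw [hr, le_div_iff₀ hθ0]; linarith
  have h1 : β - r • θ ∈ R := hR.reflect_mem θ hθR β hβ.1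
  have h2 : r • θ - β ∈ R := by
    have := RS.neg_mem hR h1; rwa [neg_sub] at this
  obtain ⟨m, hm, hmsum⟩ := hθ _ h2
  obtain ⟨l, hl, hlsum⟩ := hθ β hβ.1
  have hfθ := ftheta_pos hR hf hθR hθ
  have e1 : f θ - (r * f θ - f β) = f (m.sum) := by
    rw [← hmsum]; simp only [map_sub, map_smul, smul_eq_mul]
  have e2 : f θ - f β = f (l.sum) := by rw [← hlsum]; simp [map_sub]
  have hm0 : 0 ≤ f (m.sum) := sum_f_nonneg hm
  have hl0 : 0 ≤ f (l.sum) := sum_f_nonneg hl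
  -- f β ≥ (r-1) f θ ≥ f θ and f β ≤ f θ
  have hfl0 : f (l.sum) = 0 := by nlinarith
  have hlnil : l = [] := by
    by_contra hne
    exact (sum_f_pos hl hne).ne' hfl0
  rw [hlnil] at hlsum
  exact (by simpa [sub_eq_zero] using hlsum : θ = β).symm

/-- P7 (Heisenberg): if (δ, θ∨) = 1 then θ - δ is a root -/
lemma heisenberg {δ : V} (hδ : δ ∈ R) (hp : 2 * ⟪δ, θ⟫ = ⟪θ, θ⟫) : θ - δ ∈ R := by
  have hθ0 : (0:ℝ) < ⟪θ, θ⟫ := inner_self_pos' (hR.ne_zero θ hθR)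
  have h1 := hR.reflect_mem θ hθR δ hδ
  have hc : 2 * ⟪δ, θ⟫ / ⟪θ, θ⟫ = (1:ℝ) := by
    rw [hp]; field_simp
  rw [hc, one_smul] at h1
  have := RS.neg_mem hR h1
  rwa [neg_sub] at this

/-- roots with (δ,θ∨)=1 are positive -/
lemma R1_posRoot {δ : V} (hδ : δ ∈ R) (hp : 2 * ⟪δ, θ⟫ = ⟪θ, θ⟫) :
    δ ∈ posRoots R f := by
  have hθ0 : (0:ℝ) < ⟪θ, θ⟫ := inner_self_pos' (hR.ne_zero θ hθR)
  refine ⟨hδ, ?_⟩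
  rcases (hf δ hδ).lt_or_gt with h | h
  · exfalso
    have hneg : -δ ∈ posRoots R f := ⟨RS.neg_mem hR hδ, by rw [map_neg]; linarith⟩
    have := posRoot_inner_nonneg hR hf hθR hθ hneg
    rw [inner_neg_left] at this
    linarith
  · exact h

/-- classification of pairings with θ -/
lemma pairing_classify {γ : V} (hγ : γ ∈ R) (hne : ⟪γ, θ⟫ ≠ 0) :
    2 * ⟪γ, θ⟫ = ⟪θ, θ⟫ ∨ 2 * ⟪γ, θ⟫ = -⟪θ, θ⟫ ∨ γ = θ ∨ γ = -θ := by
  have hθ0 : (0:ℝ) < ⟪θ, θ⟫ := inner_self_pos' (hR.ne_zero θ hθR)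
  have key : ∀ γ' ∈ R, 0 < ⟪γ', θ⟫ → 2 * ⟪γ', θ⟫ = ⟪θ, θ⟫ ∨ γ' = θ := by
    intro γ' hγ' hpos
    have hfpos : 0 < f γ' := by
      rcases (hf γ' hγ').lt_or_gt with h | h
      · exfalso
        have hneg : -γ' ∈ posRoots R f := ⟨RS.neg_mem hR hγ', by rw [map_neg]; linarith⟩
        have := posRoot_inner_nonneg hR hf hθR hθ hneg
        rw [inner_neg_left] at this
        linarith
      · exact h
    by_cases hbig : ⟪θ, θ⟫ ≤ ⟪γ', θ⟫
    · exact Or.inr (eq_theta_of_big hR hf hθR hθ ⟨hγ', hfpos⟩ hbig)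
    · left
      push_neg at hbig
      obtain ⟨k, hk⟩ := hR.integral θ hθR γ' hγ'
      have hkpos : (0:ℝ) < (k:ℝ) := by rw [← hk]; positivity
      have hklt : (k:ℝ) < 2 := by
        rw [← hk, div_lt_iff₀ hθ0]; linarith
      have hk1 : k = 1 := by
        have h0 : (0:ℤ) < k := by exact_mod_cast hkpos
        have h2 : (k:ℤ) < 2 := by exact_mod_cast hklt
        omega
      have : 2 * ⟪γ', θ⟫ / ⟪θ, θ⟫ = (1:ℝ) := by rw [hk, hk1]; norm_num
      field_simp at this
      linarith [this]
  rcases hne.lt_or_gt with h | h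
  · have := key (-γ) (RS.neg_mem hR hγ) (by rw [inner_neg_left]; linarith)
    rcases this with h1 | h1
    · right; left
      rw [inner_neg_left] at h1
      linarith
    · right; right; right
      rw [← h1]; simp
  · have := key γ hγ h
    rcases this with h1 | h1
    · exact Or.inl h1
    · exact Or.inr (Or.inr (Or.inl h1))

/-- P10: a root orthogonal to θ is not orthogonal to all of R₁;
moreover we can choose positive pairing. -/
lemma exists_R1_pairing {v : V} (hv : v ∈ R) (hvθ : ⟪v, θ⟫ = 0) :
    ∃ δ ∈ R, 2 * ⟪δ, θ⟫ = ⟪θ, θ⟫ ∧ 0 < ⟪δ, v⟫ := by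
  have hθ0 : (0:ℝ) < ⟪θ, θ⟫ := inner_self_pos' (hR.ne_zero θ hθR)
  have main : ∃ δ ∈ R, 2 * ⟪δ, θ⟫ = ⟪θ, θ⟫ ∧ ⟪δ, v⟫ ≠ 0 := by
    by_contra hcon
    push_neg at hcon
    set T : Set V := {β | β ∈ R ∧ ⟪β, θ⟫ = 0 ∧
      ∀ δ ∈ R, 2 * ⟪δ, θ⟫ = ⟪θ, θ⟫ → ⟪β, δ⟫ = 0} with hT
    have hTsub : T ⊆ R := fun β hβ => hβ.1
    have hvT : v ∈ T := by
      refine ⟨hv, hvθ, fun δ hδ hp => ?_⟩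
      rw [real_inner_comm]
      exact hcon δ hδ hp
    have hθT : θ ∈ R \ T := by
      refine ⟨hθR, fun h => ?_⟩
      exact hθ0.ne' h.2.1
    apply hR.irreducible
    refine ⟨T, R \ T, ⟨v, hvT⟩, ⟨θ, hθT⟩, (Set.union_diff_cancel hTsub).symm, ?_⟩
    rintro β hβ γ ⟨hγR, hγT⟩
    by_cases hγθ : ⟪γ, θ⟫ = 0
    · -- γ is orthogonal to θ but not orthogonal to some δ ∈ R₁
      have : ∃ δ ∈ R, 2 * ⟪δ, θ⟫ = ⟪θ, θ⟫ ∧ ⟪γ, δ⟫ ≠ 0 := by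
        by_contra hc
        push_neg at hc
        exact hγT ⟨hγR, hγθ, hc⟩
      obtain ⟨δ, hδR, hδp, hγδ⟩ := this
      have hγ0 : ⟪γ, γ⟫ ≠ 0 := (inner_self_pos' (hR.ne_zero γ hγR)).ne'
      set t : ℝ := 2 * ⟪δ, γ⟫ / ⟪γ, γ⟫ with ht
      have ht0 : t ≠ 0 := by
        rw [ht]
        have : ⟪δ, γ⟫ ≠ 0 := by rwa [real_inner_comm] at hγδ
        exact div_ne_zero (by simpa using this) hγ0
      have hδ' : δ - t • γ ∈ R := hR.reflect_mem γ hγR δ hδR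
      have hδ'p : 2 * ⟪δ - t • γ, θ⟫ = ⟪θ, θ⟫ := by
        rw [inner_sub_left, real_inner_smul_left, hγθ]
        simpa using hδp
      have h1 : ⟪β, δ - t • γ⟫ = 0 := hβ.2.2 _ hδ' hδ'p
      have h2 : ⟪β, δ⟫ = 0 := hβ.2.2 δ hδR hδp
      rw [inner_sub_right, real_inner_smul_right, h2] at h1
      have : t * ⟪β, γ⟫ = 0 := by linarith
      rcases mul_eq_zero.1 this with h | h
      · exact absurd h ht0
      · exact h
    · rcases pairing_classify hR hf hθR hθ hγR hγθ with h | h | h | h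
      · exact hβ.2.2 γ hγR h
      · have := hβ.2.2 (-γ) (RS.neg_mem hR hγR)
          (by rw [inner_neg_left]; linarith)
        rw [inner_neg_right] at this
        linarith
      · rw [h]; exact hβ.2.1
      · rw [h, inner_neg_right, hβ.2.1, neg_zero]
  obtain ⟨δ, hδR, hδp, hδv⟩ := main
  rcases hδv.lt_or_gt with h | h
  · refine ⟨θ - δ, heisenberg hR hf hθR hθ hδR hδp, ?_, ?_⟩
    · rw [inner_sub_left]; linarith
    · rw [inner_sub_left, real_inner_comm v θ, hvθ]
      linarith
  · exact ⟨δ, hδR, hδp, h⟩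

end Aux

section Weyl
variable {V : Type*} [NormedAddCommGroup V] [InnerProductSpace ℝ V] {R : Set V}

lemma weyl_props (hR : IsRootSystem R) {w : Function.End V} (hw : w ∈ weylMonoid R) :
    (∀ α ∈ R, w α ∈ R) ∧ ∀ x y : V, ⟪w x, w y⟫ = ⟪x, y⟫ := by
  induction hw using Submonoid.closure_induction with
  | mem g hg =>
    obtain ⟨α, hα, rfl⟩ := hg
    have ha : ⟪α, α⟫ ≠ 0 := (inner_self_pos' (hR.ne_zero α hα)).ne'
    constructor
    · intro β hβ
      exact hR.reflect_mem α hα β hβ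
    · intro x y
      show ⟪x - (2 * ⟪x, α⟫ / ⟪α, α⟫) • α, y - (2 * ⟪y, α⟫ / ⟪α, α⟫) • α⟫ = ⟪x, y⟫
      simp only [inner_sub_left, inner_sub_right, real_inner_smul_left,
        real_inner_smul_right, real_inner_comm α y, real_inner_comm α x]
      field_simp
      ring
  | one => exact ⟨fun α hα => hα, fun x y => rfl⟩
  | mul g h hg hh ihg ihh =>
    refine ⟨fun α hα => ihg.1 _ (ihh.1 α hα), fun x y => ?_⟩
    calc ⟪g (h x), g (h y)⟫ = ⟪h x, h y⟫ := ihg.2 _ _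
      _ = ⟪x, y⟫ := ihh.2 _ _

end Weyl



/-- Extremal Kostant degree of the highest root `θ` (untwisted): for `w` in the
Weyl group, `n(θ,w) = 0` if `w(θ) = θ`; `n(θ,w) = 1` if `(w(θ),θ) > 0` and
`w(θ) ≠ θ`; and `n(θ,w) = 2` if `(w(θ),θ) ≤ 0`.  The highest root is
characterized by the property that `θ - β` is a nonnegative integer combination
of simple roots (i.e. a sum of a list of simple roots) for every root `β`. -/
theorem extremal_kostant_highest_root {V : Type*} [NormedAddCommGroup V]
    [InnerProductSpace ℝ V] [FiniteDimensional ℝ V]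
    (R : Set V) (hR : IsRootSystem R)
    (f : V →ₗ[ℝ] ℝ) (hf : ∀ α ∈ R, f α ≠ 0)
    (θ : V) (hθR : θ ∈ R)
    (hθ : ∀ β ∈ R, ∃ l : List V, (∀ γ ∈ l, γ ∈ simpleRoots R f) ∧ θ - β = l.sum)
    (w : Function.End V) (hw : w ∈ weylMonoid R) :
    (w θ = θ → IsLeast (decompLengths (posRoots R f) (θ - w θ)) 0) ∧
    (0 < ⟪w θ, θ⟫ → w θ ≠ θ → IsLeast (decompLengths (posRoots R f) (θ - w θ)) 1) ∧
    (⟪w θ, θ⟫ ≤ 0 → IsLeast (decompLengths (posRoots R f) (θ - w θ)) 2) := by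
  obtain ⟨hmap, hinner⟩ := weyl_props hR hw
  have hv : w θ ∈ R := hmap θ hθR
  have hθ0 : (0:ℝ) < ⟪θ, θ⟫ := inner_self_pos' (hR.ne_zero θ hθR)
  refine ⟨?_, ?_, ?_⟩
  · -- case w θ = θ
    intro h
    exact ⟨⟨[], by simp, by simp [h], rfl⟩, fun n _ => Nat.zero_le n⟩
  · -- case 0 < (wθ, θ), wθ ≠ θ
    intro h1 h2
    constructor
    · refine ⟨[θ - w θ], ?_, by simp, rfl⟩
      intro β hβ
      simp only [List.mem_singleton] at hβ
      subst hβ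
      have hmem : θ - w θ ∈ R :=
        RS.sub_mem hR hθR hv (by rw [real_inner_comm (w θ) θ]; exact h1) (Ne.symm h2)
      exact theta_sub_posRoot hR hf hθR hθ hv hmem
    · intro n hn
      obtain ⟨l, hl, hsum, hlen⟩ := hn
      rcases Nat.eq_zero_or_pos n with h0 | h0
      · exfalso
        subst h0
        rw [List.length_eq_zero_iff] at hlen
        subst hlen
        simp only [List.sum_nil] at hsum
        exact h2 (sub_eq_zero.1 hsum.symm).symm
      · exact h0
  · -- case (wθ, θ) ≤ 0
    intro h
    have hne : w θ ≠ θ := by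
      intro e
      rw [e] at h
      linarith
    have hv0 : w θ ≠ 0 := hR.ne_zero _ hv
    constructor
    · -- a decomposition of length 2
      rcases (hf _ hv).lt_or_gt with hfv | hfv
      · -- w θ is a negative root : θ - wθ = θ + (-wθ)
        refine ⟨[θ, -(w θ)], ?_, ?_, rfl⟩
        · intro β hβ
          simp only [List.mem_cons, List.mem_singleton, List.not_mem_nil, or_false] at hβ
          rcases hβ with rfl | rfl
          · exact theta_posRoot hR hf hθR hθ
          · exact ⟨RS.neg_mem hR hv, by rw [map_neg]; linarith⟩
        · simp only [List.sum_cons, List.sum_nil, add_zero]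
          abel
      · -- w θ is a positive root, necessarily orthogonal to θ
        have hvpos : w θ ∈ posRoots R f := ⟨hv, hfv⟩
        have h0 : ⟪w θ, θ⟫ = 0 :=
          le_antisymm h (posRoot_inner_nonneg hR hf hθR hθ hvpos)
        obtain ⟨δ, hδR, hδp, hδv⟩ := exists_R1_pairing hR hf hθR hθ hv h0
        have hδne : δ ≠ w θ := by
          intro e
          rw [e, h0] at hδp
          simp at hδp
          exact hθ0.ne' (by rw [real_inner_self_eq_norm_sq]; exact hδp.symm)
        have hβ2 : δ - w θ ∈ R := RS.sub_mem hR hδR hv hδv hδne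
        have hβ1 : θ - δ ∈ R := heisenberg hR hf hθR hθ hδR hδp
        have hβ1p : θ - δ ∈ posRoots R f := by
          refine R1_posRoot hR hf hθR hθ hβ1 ?_
          rw [inner_sub_left]
          linarith
        have hβ2p : δ - w θ ∈ posRoots R f := by
          refine R1_posRoot hR hf hθR hθ hβ2 ?_
          rw [inner_sub_left, h0]
          linarith
        refine ⟨[θ - δ, δ - w θ], ?_, ?_, rfl⟩
        · intro β hβ
          simp only [List.mem_cons, List.mem_singleton, List.not_mem_nil, or_false] at hβ
          rcases hβ with rfl | rfl
          · exact hβ1p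
          · exact hβ2p
        · simp only [List.sum_cons, List.sum_nil, add_zero]
          abel
    · -- lower bound: 2 ≤ n
      intro n hn
      obtain ⟨l, hl, hsum, hlen⟩ := hn
      by_contra hlt
      push_neg at hlt
      interval_cases n
      · rw [List.length_eq_zero_iff] at hlen
        subst hlen
        simp only [List.sum_nil] at hsum
        rw [(sub_eq_zero.1 hsum.symm).symm] at h
        linarith
      · obtain ⟨β, rfl⟩ := List.length_eq_one_iff.1 hlen
        simp only [List.sum_cons, List.sum_nil, add_zero] at hsum
        have hβp : β ∈ posRoots R f := hl β (by simp)
        have hbig : ⟪θ, θ⟫ ≤ ⟪β, θ⟫ := by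
          rw [hsum, inner_sub_left]
          linarith
        have hβθ : β = θ := eq_theta_of_big hR hf hθR hθ hβp hbig
        rw [hβθ] at hsum
        exact hv0 (sub_eq_self.1 hsum.symm)
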